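/- arXiv:1510.01791 — 4 statements merged into one kernel-verified Lean document; each statement's English description precedes it below -/
import Mathlib

section
/- If h : ℝⁿ → ℝ is convex and ε > 0, then the function (λ, ν) ↦ (λ + ε) · h(ν/(λ + ε)) + h(0)·(λ − 1) is convex on {(λ, ν) : λ ≥ 0}. -/
/-- The second Sawaya–Grossmann modification is convex on `{(λ, ν) : λ ≥ 0}`. -/
theorem sawaya_approx_convex {n : ℕ} (h : (Fin n → ℝ) → ℝ)
    (hconv : ConvexOn ℝ Set.univ h) (ε : ℝ) (hε : 0 < ε) :
    ConvexOn ℝ {p : ℝ × (Fin n → ℝ) | 0 ≤ p.1}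
      (fun p => (p.1 + ε) * h ((p.1 + ε)⁻¹ • p.2) + h 0 * (p.1 - 1)) := by
  constructor
  · intro p hp q hq a b ha hb hab
    simp only [Set.mem_setOf_eq] at *
    show 0 ≤ a * p.1 + b * q.1
    exact add_nonneg (mul_nonneg ha hp) (mul_nonneg hb hq)
  · intro p hp q hq a b ha hb hab
    simp only [Set.mem_setOf_eq] at hp hq
    have hpε : (0:ℝ) < p.1 + ε := by linarith
    have hqε : (0:ℝ) < q.1 + ε := by linarith
    set u := (p.1 + ε)⁻¹ • p.2 with hu
    set v := (q.1 + ε)⁻¹ • q.2 with hv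
    set c := a * (p.1 + ε) + b * (q.1 + ε) with hcdef
    have hc : 0 < c := by
      have := mul_nonneg ha hp
      have := mul_nonneg hb hq
      nlinarith
    have hw1 : 0 ≤ a * (p.1 + ε) / c := by positivity
    have hw2 : 0 ≤ b * (q.1 + ε) / c := by positivity
    have hw : a * (p.1 + ε) / c + b * (q.1 + ε) / c = 1 := by
      field_simp
      exact hcdef.symm
    have key := hconv.2 (Set.mem_univ u) (Set.mem_univ v) hw1 hw2 hw
    simp only [smul_eq_mul] at key
    have hc' : a * p.1 + b * q.1 + ε = c := by
      rw [hcdef]; linear_combination (-ε) * hab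
    have heq : (a * (p.1 + ε) / c) • u + (b * (q.1 + ε) / c) • v
        = c⁻¹ • (a • p.2 + b • q.2) := by
      rw [hu, hv]
      match_scalars <;> field_simp <;> ring
    show ((a • p + b • q).1 + ε) * h (((a • p + b • q).1 + ε)⁻¹ • (a • p + b • q).2)
        + h 0 * ((a • p + b • q).1 - 1) ≤ _
    simp only [Prod.fst_add, Prod.snd_add, Prod.smul_fst, Prod.smul_snd, smul_eq_mul]
    rw [hc', ← heq]
    have hmul := mul_le_mul_of_nonneg_left key hc.le
    have e1 : c * (a * (p.1 + ε) / c * h u + b * (q.1 + ε) / c * h v)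
        = a * (p.1 + ε) * h u + b * (q.1 + ε) * h v := by
      field_simp
    have e2 : h 0 * (a * p.1 + b * q.1 - 1)
        = a * (h 0 * (p.1 - 1)) + b * (h 0 * (q.1 - 1)) := by
      linear_combination (h 0) * hab
    rw [e1] at hmul
    nlinarith [hmul, e2]
end

section
/- Consider a single disjunction with terms j ∈ {1,…,m}, constraints h_j : ℝⁿ → ℝ, and bounds x^L ≤ x ≤ x^U. Then x satisfies the disjunction (i.e., there exists j with h_j(x) ≤ 0 and x^L ≤ x ≤ x^U) if and only if there exist binary λ_j ∈ {0,1} with ∑_j λ_j = 1, vectors ν_j^t, ν_j^f with λ_j x^L ≤ ν_j^t ≤ λ_j x^U, (1−λ_j) x^L ≤ ν_j^f ≤ (1−λ_j) x^U, x̂_j = ν_j^t + ν_j^f, h_j(x̂_j) ≤ 0 for all j, and x = ∑_j ν_j^t, provided each h_j has a feasible point in [x^L, x^U] (so that the false copies can be made feasible). -/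
open Finset in
/-- The True-False Reformulation of a single disjunction is exact. -/
theorem true_false_reformulation_exact {n m : ℕ}
    (h : Fin m → (Fin n → ℝ) → ℝ) (xL xU x : Fin n → ℝ)
    (hfeas : ∀ j, ∃ y : Fin n → ℝ, xL ≤ y ∧ y ≤ xU ∧ h j y ≤ 0) :
    ((xL ≤ x ∧ x ≤ xU) ∧ ∃ j, h j x ≤ 0) ↔
      ∃ (lam : Fin m → ℝ) (νt νf : Fin m → Fin n → ℝ),
        (∀ j, lam j = 0 ∨ lam j = 1) ∧
        (∑ j, lam j = 1) ∧
        (∀ j, lam j • xL ≤ νt j ∧ νt j ≤ lam j • xU) ∧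
        (∀ j, (1 - lam j) • xL ≤ νf j ∧ νf j ≤ (1 - lam j) • xU) ∧
        (∀ j, h j (νt j + νf j) ≤ 0) ∧
        x = ∑ j, νt j := by
  constructor
  · rintro ⟨⟨hL, hU⟩, j0, hj0⟩
    choose y hy1 hy2 hy3 using hfeas
    refine ⟨fun j => if j = j0 then 1 else 0,
      fun j => if j = j0 then x else 0,
      fun j => if j = j0 then 0 else y j, ?_, ?_, ?_, ?_, ?_, ?_⟩
    · intro j; by_cases hj : j = j0 <;> simp [hj]
    · simp
    · intro j; by_cases hj : j = j0 <;> simp [hj, hL, hU]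
    · intro j; by_cases hj : j = j0 <;> simp [hj, hy1, hy2]
    · intro j; by_cases hj : j = j0 <;> simp [hj, hj0, hy3]
    · simp
  · rintro ⟨lam, νt, νf, h01, hsum, ht, hf, hh, hx⟩
    have hnonneg : ∀ j, 0 ≤ lam j := by
      intro j; rcases h01 j with h' | h' <;> simp [h']
    obtain ⟨j0, hj0⟩ : ∃ j, lam j ≠ 0 := by
      by_contra hc
      push_neg at hc
      simp [hc] at hsum
    have hlj0 : lam j0 = 1 := (h01 j0).resolve_left hj0
    have hzero : ∀ j ≠ j0, lam j = 0 := by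
      intro j hj
      have hs := Finset.add_sum_erase Finset.univ lam (Finset.mem_univ j0)
      rw [hsum, hlj0] at hs
      have h0 : ∑ k ∈ Finset.univ.erase j0, lam k = 0 := by linarith
      have := Finset.sum_eq_zero_iff_of_nonneg (fun k _ => hnonneg k) |>.mp h0 j
        (Finset.mem_erase.mpr ⟨hj, Finset.mem_univ j⟩)
      exact this
    have hνt0 : ∀ j ≠ j0, νt j = 0 := by
      intro j hj
      have h1 := (ht j).1
      have h2 := (ht j).2
      rw [hzero j hj, zero_smul] at h1 h2
      exact le_antisymm h2 h1
    have hνf0 : νf j0 = 0 := by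
      have h1 := (hf j0).1
      have h2 := (hf j0).2
      rw [hlj0] at h1 h2
      simp at h1 h2
      exact le_antisymm h2 h1
    have hxeq : x = νt j0 := by
      rw [hx, Finset.sum_eq_single j0 (fun j _ hj => hνt0 j hj) (by simp)]
    have hb1 := (ht j0).1
    have hb2 := (ht j0).2
    rw [hlj0, one_smul] at hb1 hb2
    refine ⟨⟨hxeq ▸ hb1, hxeq ▸ hb2⟩, j0, ?_⟩
    have := hh j0
    rwa [hνf0, add_zero, ← hxeq] at this
end

section
/- Suppose D = {x ∈ [x^L, x^U] : h₁(x) ≤ 0} ∪ {x ∈ [x^L, x^U] : h₂(x) ≤ 0} with both sets nonempty. Then the projection onto x of the True-False Reformulation feasible set (with λ ∈ {0,1}²) equals D. -/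
/-- The projection onto `x` of the two-term True-False Reformulation feasible set
equals the disjunctive set `D`. -/
theorem true_false_projection {n : ℕ}
    (h₁ h₂ : (Fin n → ℝ) → ℝ) (xL xU : Fin n → ℝ)
    (hne₁ : ∃ y, xL ≤ y ∧ y ≤ xU ∧ h₁ y ≤ 0)
    (hne₂ : ∃ y, xL ≤ y ∧ y ≤ xU ∧ h₂ y ≤ 0) :
    {x : Fin n → ℝ |
      ∃ (lam₁ lam₂ : ℝ) (ν₁t ν₂t ν₁f ν₂f : Fin n → ℝ),
        (lam₁ = 0 ∨ lam₁ = 1) ∧ (lam₂ = 0 ∨ lam₂ = 1) ∧ lam₁ + lam₂ = 1 ∧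
        (lam₁ • xL ≤ ν₁t ∧ ν₁t ≤ lam₁ • xU) ∧
        (lam₂ • xL ≤ ν₂t ∧ ν₂t ≤ lam₂ • xU) ∧
        ((1 - lam₁) • xL ≤ ν₁f ∧ ν₁f ≤ (1 - lam₁) • xU) ∧
        ((1 - lam₂) • xL ≤ ν₂f ∧ ν₂f ≤ (1 - lam₂) • xU) ∧
        h₁ (ν₁t + ν₁f) ≤ 0 ∧ h₂ (ν₂t + ν₂f) ≤ 0 ∧
        x = ν₁t + ν₂t} =
    ({x | xL ≤ x ∧ x ≤ xU ∧ h₁ x ≤ 0} ∪ {x | xL ≤ x ∧ x ≤ xU ∧ h₂ x ≤ 0}) := by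
  ext x
  simp only [Set.mem_setOf_eq, Set.mem_union]
  constructor
  · rintro ⟨lam₁, lam₂, ν₁t, ν₂t, ν₁f, ν₂f, hl₁, hl₂, hsum,
      ⟨h1l, h1u⟩, ⟨h2l, h2u⟩, ⟨hf1l, hf1u⟩, ⟨hf2l, hf2u⟩, hh₁, hh₂, hx⟩
    rcases hl₁ with rfl | rfl
    · -- lam₁ = 0, so lam₂ = 1
      have hlam₂ : lam₂ = 1 := by linarith
      subst hlam₂
      rw [zero_smul] at h1l h1u
      have hν₁t : ν₁t = 0 := le_antisymm h1u h1l
      rw [show (1:ℝ) - 1 = 0 by ring, zero_smul] at hf2l hf2u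
      have hν₂f : ν₂f = 0 := le_antisymm hf2u hf2l
      rw [one_smul] at h2l h2u
      right
      rw [hx, hν₁t, zero_add]
      refine ⟨h2l, h2u, ?_⟩
      rwa [hν₂f, add_zero] at hh₂
    · -- lam₁ = 1, lam₂ = 0
      have hlam₂ : lam₂ = 0 := by linarith
      subst hlam₂
      rw [zero_smul] at h2l h2u
      have hν₂t : ν₂t = 0 := le_antisymm h2u h2l
      rw [show (1:ℝ) - 1 = 0 by ring, zero_smul] at hf1l hf1u
      have hν₁f : ν₁f = 0 := le_antisymm hf1u hf1l
      rw [one_smul] at h1l h1u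
      left
      rw [hx, hν₂t, add_zero]
      refine ⟨h1l, h1u, ?_⟩
      rwa [hν₁f, add_zero] at hh₁
  · rintro (⟨hxl, hxu, hh⟩ | ⟨hxl, hxu, hh⟩)
    · obtain ⟨y, hyl, hyu, hy⟩ := hne₂
      refine ⟨1, 0, x, 0, 0, y, Or.inr rfl, Or.inl rfl, by ring, ?_, ?_, ?_, ?_, ?_, ?_, ?_⟩
      · simp only [one_smul]; exact ⟨hxl, hxu⟩
      · simp only [zero_smul]; exact ⟨le_refl _, le_refl _⟩
      · simp only [show (1:ℝ) - 1 = 0 by ring, zero_smul]; exact ⟨le_refl _, le_refl _⟩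
      · simp only [show (1:ℝ) - 0 = 1 by ring, one_smul]; exact ⟨hyl, hyu⟩
      · rwa [add_zero]
      · rwa [zero_add]
      · rw [add_zero]
    · obtain ⟨y, hyl, hyu, hy⟩ := hne₁
      refine ⟨0, 1, 0, x, y, 0, Or.inl rfl, Or.inr rfl, by ring, ?_, ?_, ?_, ?_, ?_, ?_, ?_⟩
      · simp only [zero_smul]; exact ⟨le_refl _, le_refl _⟩
      · simp only [one_smul]; exact ⟨hxl, hxu⟩
      · simp only [show (1:ℝ) - 0 = 1 by ring, one_smul]; exact ⟨hyl, hyu⟩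
      · simp only [show (1:ℝ) - 1 = 0 by ring, zero_smul]; exact ⟨le_refl _, le_refl _⟩
      · rwa [zero_add]
      · rwa [add_zero]
      · rw [zero_add]
end

section
/- If h : ℝ → ℝ is convex and nonconstant with h(0) > 0, then the function (λ, ν) ↦ λ · h(ν/(λ + ε)) need not be convex: there exists a convex h, ε > 0, and points in {(λ, ν) : 0 ≤ λ ≤ 1} at which the midpoint convexity inequality fails. -/
/-- The approximation `λ h(ν/(λ+ε))` can fail to be convex even for convex,
nonconstant `h` with `h 0 > 0`: midpoint convexity fails at some points. -/
theorem modified_approx_not_convex :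
    ∃ (h : ℝ → ℝ) (ε : ℝ),
      ConvexOn ℝ Set.univ h ∧ (∃ s t : ℝ, h s ≠ h t) ∧ 0 < h 0 ∧ 0 < ε ∧
      ∃ p q : ℝ × ℝ, p.1 ∈ Set.Icc (0 : ℝ) 1 ∧ q.1 ∈ Set.Icc (0 : ℝ) 1 ∧
        ¬ ((((p.1 + q.1) / 2) * h (((p.2 + q.2) / 2) / ((p.1 + q.1) / 2 + ε))) ≤
            (p.1 * h (p.2 / (p.1 + ε)) + q.1 * h (q.2 / (q.1 + ε))) / 2) := by
  refine ⟨fun t => t ^ 2 + 1, 1, ?_, ⟨1, 0, by norm_num⟩, by norm_num, one_pos,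
    (0, 3), (1, 0), by norm_num, by norm_num, by norm_num⟩
  exact (Even.convexOn_pow even_two).add (convexOn_const 1 convex_univ)
end
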